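/- If S_a(x) < ∞ for all x ∈ X, then S_a is a nonnegative storage function satisfying the dissipation inequality, and inf_x S_a(x) = 0 provided some state x₀ has S_a(x₀) = 0 or the trivial trajectories give S_a ≥ 0 with the infimum attained arbitrarily closely; moreover every nonnegative storage function S satisfies S_a(x) ≤ S(x) − inf_x S(x). -/

import Mathlib

open Set Filter

/-- An abstract system: a set of trajectories, each recorded as
(initial state, final state, integral of the supply rate along the trajectory). -/
structure Sys (X : Type) where
  Traj : Set (X × X × ℝ)

/-- `S` is a storage function: the dissipation inequality holds along all trajectories. -/
def IsStorage {X : Type} (P : Sys X) (S : X → ℝ) : Prop :=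
  ∀ τ ∈ P.Traj, S τ.2.1 ≤ S τ.1 + τ.2.2

/-- Cyclo-dissipativity: the supply integral is nonnegative along every cyclic trajectory. -/
def CycloDiss {X : Type} (P : Sys X) : Prop :=
  ∀ τ ∈ P.Traj, τ.2.1 = τ.1 → 0 ≤ τ.2.2

/-- Cyclo-dissipativity with respect to the ground state `xs`. -/
def CycloDissAt {X : Type} (P : Sys X) (xs : X) : Prop :=
  ∀ r : ℝ, (xs, xs, r) ∈ P.Traj → 0 ≤ r

/-- Available storage `S_a(x)`: sup of `-∫ s` over trajectories starting at `x`. -/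
noncomputable def Sa {X : Type} (P : Sys X) (x : X) : EReal :=
  sSup {e : EReal | ∃ y r, (x, y, r) ∈ P.Traj ∧ e = ((-r : ℝ) : EReal)}

/-- Required supply `S_r(x)`: inf of `∫ s` over trajectories ending at `x`. -/
noncomputable def Sr {X : Type} (P : Sys X) (x : X) : EReal :=
  sInf {e : EReal | ∃ y r, (y, x, r) ∈ P.Traj ∧ e = ((r : ℝ) : EReal)}

/-- Constrained available storage `S_{ac}(x)` w.r.t. ground state `xs`:
sup of `-∫ s` over trajectories from `x` to `xs`. -/
noncomputable def Sac {X : Type} (P : Sys X) (xs x : X) : EReal :=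
  sSup {e : EReal | ∃ r, (x, xs, r) ∈ P.Traj ∧ e = ((-r : ℝ) : EReal)}

/-- Constrained required supply `S_{rc}(x)` w.r.t. ground state `xs`:
inf of `∫ s` over trajectories from `xs` to `x`. -/
noncomputable def Src {X : Type} (P : Sys X) (xs x : X) : EReal :=
  sInf {e : EReal | ∃ r, (xs, x, r) ∈ P.Traj ∧ e = ((r : ℝ) : EReal)}

/-- Trajectories can be concatenated, supply integrals adding up. -/
def HasConcat {X : Type} (P : Sys X) : Prop :=
  ∀ x y z r₁ r₂, (x, y, r₁) ∈ P.Traj → (y, z, r₂) ∈ P.Traj → (x, z, r₁ + r₂) ∈ P.Traj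

/-- Every state admits the trivial trajectory of duration zero. -/
def HasTrivial {X : Type} (P : Sys X) : Prop := ∀ x, (x, x, (0:ℝ)) ∈ P.Traj

/-- Every state is reachable from `xs`. -/
def ReachableFrom {X : Type} (P : Sys X) (xs : X) : Prop := ∀ x, ∃ r, (xs, x, r) ∈ P.Traj

/-- Every state can be steered to `xs`. -/
def ControllableTo {X : Type} (P : Sys X) (xs : X) : Prop := ∀ x, ∃ r, (x, xs, r) ∈ P.Traj

lemma Sa_nonneg {X : Type} (P : Sys X) (htriv : HasTrivial P) (x : X) :
    (0 : EReal) ≤ Sa P x := by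
  apply le_sSup
  exact ⟨x, 0, htriv x, by norm_num⟩

lemma Sa_diss {X : Type} (P : Sys X) (hcat : HasConcat P) {x y : X} {r : ℝ}
    (h : (x, y, r) ∈ P.Traj) : Sa P y ≤ Sa P x + (r : EReal) := by
  apply sSup_le
  rintro e ⟨z, r₂, hz, rfl⟩
  have h1 : ((-(r + r₂) : ℝ) : EReal) ≤ Sa P x :=
    le_sSup ⟨z, r + r₂, hcat x y z r r₂ h hz, rfl⟩
  calc ((-r₂ : ℝ) : EReal) = ((-(r + r₂) : ℝ) : EReal) + (r : EReal) := by
        rw [← EReal.coe_add]; norm_num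
    _ ≤ Sa P x + (r : EReal) := add_le_add h1 le_rfl

/-- if S_a is finite then it is a nonnegative storage function with inf 0,
and every nonnegative storage function S satisfies S_a(x) ≤ S(x) − inf S. -/
theorem stmt12 {X : Type} [Nonempty X] (P : Sys X) (hcat : HasConcat P)
    (htriv : HasTrivial P) (hfin : ∀ x : X, Sa P x < ⊤) :
    IsStorage P (fun x => (Sa P x).toReal) ∧ (∀ x : X, 0 ≤ (Sa P x).toReal) ∧
    (⨅ x : X, Sa P x) = 0 ∧
    ∀ S : X → ℝ, (∀ x, 0 ≤ S x) → IsStorage P S →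
      ∀ x : X, Sa P x ≤ ((S x - sInf (Set.range S) : ℝ) : EReal) := by
  have hbot : ∀ x : X, Sa P x ≠ ⊥ := fun x =>
    ne_bot_of_le_ne_bot (by simp) (Sa_nonneg P htriv x)
  have htop : ∀ x : X, Sa P x ≠ ⊤ := fun x => (hfin x).ne
  have hcoe : ∀ x : X, Sa P x = ((Sa P x).toReal : EReal) := fun x =>
    (EReal.coe_toReal (htop x) (hbot x)).symm
  refine ⟨?_, ?_, ?_, ?_⟩
  · rintro ⟨x, y, r⟩ hτ
    have h := Sa_diss P hcat hτ
    simp only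
    have h2 : (Sa P x + (r : EReal)) = (((Sa P x).toReal + r : ℝ) : EReal) := by
      rw [EReal.coe_add]; congr 1; exact hcoe x
    rw [h2, hcoe y] at h
    exact_mod_cast h
  · intro x
    have h := Sa_nonneg P htriv x
    rw [hcoe x] at h
    exact_mod_cast h
  · refine le_antisymm ?_ (le_iInf fun x => Sa_nonneg P htriv x)
    by_contra hlt
    push_neg at hlt
    obtain ⟨c, hc0, hcle⟩ := exists_between hlt
    -- c : EReal, 0 < c < ⨅
    obtain ⟨x⟩ := ‹Nonempty X›
    have hcx : ∀ y : X, c ≤ Sa P y := fun y => le_trans hcle.le (iInf_le _ y)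
    -- c could be ⊤? no, since Sa P x < ⊤ and c ≤ Sa P x
    have hcne : c ≠ ⊤ := fun h => (htop x) (top_le_iff.mp (h ▸ hcx x))
    have hcnb : c ≠ ⊥ := ne_bot_of_le_ne_bot (by simp) hc0.le
    set cr := c.toReal with hcr
    have hcrpos : 0 < cr := by
      have : c = ((cr : ℝ) : EReal) := (EReal.coe_toReal hcne hcnb).symm
      rw [this] at hc0
      exact_mod_cast hc0
    set a := (Sa P x).toReal
    -- find trajectory from x with -r > a - cr/2
    have h1 : ((a - cr/2 : ℝ) : EReal) < Sa P x := by
      rw [hcoe x]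
      exact_mod_cast (by linarith : a - cr/2 < a)
    obtain ⟨e, ⟨y, r, hyr, rfl⟩, he⟩ := lt_sSup_iff.mp h1
    -- find trajectory from y with -r₂ > cr/2
    have h2 : ((cr/2 : ℝ) : EReal) < Sa P y := by
      calc ((cr/2 : ℝ) : EReal) < (cr : EReal) := by exact_mod_cast (by linarith : cr/2 < cr)
        _ = c := (EReal.coe_toReal hcne hcnb)
        _ ≤ Sa P y := hcx y
    obtain ⟨e, ⟨z, r₂, hzr, rfl⟩, he2⟩ := lt_sSup_iff.mp h2
    have h3 : ((-(r + r₂) : ℝ) : EReal) ≤ Sa P x :=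
      le_sSup ⟨z, r + r₂, hcat x y z r r₂ hyr hzr, rfl⟩
    rw [hcoe x] at h3
    have he' : a - cr/2 < -r := by exact_mod_cast he
    have he2' : cr/2 < -r₂ := by exact_mod_cast he2
    have h3' : -(r + r₂) ≤ a := by exact_mod_cast h3
    linarith
  · intro S hS hstor x
    apply sSup_le
    rintro e ⟨y, r, hyr, rfl⟩
    have h1 : S y ≤ S x + r := hstor _ hyr
    have h2 : sInf (Set.range S) ≤ S y := csInf_le ⟨0, by rintro _ ⟨z, rfl⟩; exact hS z⟩ ⟨y, rfl⟩
    exact_mod_cast (by linarith : -r ≤ S x - sInf (Set.range S))
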